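/- Cancellation estimate for the tug-of-war part: let n ≥ 1, ε > 0, L ≥ 0, and x, y ∈ ℝⁿ with |x − y| ≤ ε. Let u : ℝⁿ → ℝ be bounded and suppose |u(z) − u(z')| ≤ L(|z − z'| + ε) for all z, z' ∈ B_{3ε}(x). Then | (1/(2ε)) ∫₀^ε ( sup_{B_t(x)} u + inf_{B_t(x)} u ) dt − (1/(2ε)) ∫₀^ε ( sup_{B_t(y)} u + inf_{B_t(y)} u ) dt | ≤ 3 L |x − y|. -/

import Mathlib

open MeasureTheory Metric Set

private lemma integral_mono_ioc {f g : ℝ → ℝ} {a b : ℝ} (hab : a ≤ b)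
    (hf : IntervalIntegrable f volume a b) (hg : IntervalIntegrable g volume a b)
    (h : ∀ t ∈ Set.Ioc a b, f t ≤ g t) :
    ∫ t in a..b, f t ≤ ∫ t in a..b, g t := by
  rw [intervalIntegral.integral_of_le hab, intervalIntegral.integral_of_le hab]
  exact setIntegral_mono_on hf.1 hg.1 measurableSet_Ioc h

private lemma integral_congr_ioc {f g : ℝ → ℝ} {a b : ℝ} (hab : a ≤ b)
    (h : ∀ t ∈ Set.Ioc a b, f t = g t) :
    ∫ t in a..b, f t = ∫ t in a..b, g t := by
  rw [intervalIntegral.integral_of_le hab, intervalIntegral.integral_of_le hab]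
  exact setIntegral_congr_fun measurableSet_Ioc h

/-- sup of `u` over `ball r t` together with the center value. -/
private noncomputable def supb {E : Type*} [PseudoMetricSpace E] (u : E → ℝ) (r : E) (t : ℝ) :
    ℝ := sSup (insert (u r) (u '' Metric.ball r t))

/-- inf of `u` over `ball r t` together with the center value. -/
private noncomputable def infb {E : Type*} [PseudoMetricSpace E] (u : E → ℝ) (r : E) (t : ℝ) :
    ℝ := sInf (insert (u r) (u '' Metric.ball r t))

section basic

variable {E : Type*} [PseudoMetricSpace E] {u : E → ℝ} {M : ℝ}

private lemma bddA (hM : ∀ z, |u z| ≤ M) (r : E) (t : ℝ) :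
    BddAbove (insert (u r) (u '' Metric.ball r t)) :=
  ⟨M, by rintro w (rfl | ⟨z, -, rfl⟩) <;> exact (abs_le.mp (hM _)).2⟩

private lemma bddB (hM : ∀ z, |u z| ≤ M) (r : E) (t : ℝ) :
    BddBelow (insert (u r) (u '' Metric.ball r t)) :=
  ⟨-M, by rintro w (rfl | ⟨z, -, rfl⟩) <;> exact (abs_le.mp (hM _)).1⟩

private lemma supb_mono (hM : ∀ z, |u z| ≤ M) (r : E) : Monotone (supb u r) :=
  fun s t hst => csSup_le_csSup (bddA hM r t) (insert_nonempty _ _)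
    (insert_subset_insert (image_mono (f := u) (ball_subset_ball hst)))

private lemma infb_anti (hM : ∀ z, |u z| ≤ M) (r : E) : Antitone (infb u r) :=
  fun s t hst => csInf_le_csInf (bddB hM r t) (insert_nonempty _ _)
    (insert_subset_insert (image_mono (f := u) (ball_subset_ball hst)))

end basic

private lemma tow_half {E : Type*} [PseudoMetricSpace E] (ε L : ℝ) (hε : 0 < ε) (hL : 0 ≤ L)
    (p q : E) (hd : dist p q ≤ ε) (u : E → ℝ) (M : ℝ) (hM : ∀ z, |u z| ≤ M)
    (H : ∀ z z', dist z p < ε + dist p q → dist z' p < ε + dist p q →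
      |u z - u z'| ≤ L * (dist z z' + ε)) :
    ((∫ t in (0:ℝ)..ε, supb u q t) + (∫ t in (0:ℝ)..ε, infb u q t)) -
    ((∫ t in (0:ℝ)..ε, supb u p t) + (∫ t in (0:ℝ)..ε, infb u p t)) ≤
    2 * L * dist p q * (2 * ε + dist p q) := by
  set d := dist p q with hd_def
  have hd0 : 0 ≤ d := dist_nonneg
  have hqp : dist q p = d := by rw [dist_comm]
  have monoSp := supb_mono hM p (M := M)
  have monoSq := supb_mono hM q (M := M)
  have antIp := infb_anti hM p (M := M)
  have antIq := infb_anti hM q (M := M)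
  -- step 1 : ∫ Sq ≤ ∫ Sp (·+d) = ∫_d^{ε+d} Sp
  have h1 : (∫ t in (0:ℝ)..ε, supb u q t) ≤ ∫ t in d..(ε + d), supb u p t := by
    have := intervalIntegral.integral_comp_add_right (a := (0:ℝ)) (b := ε) (supb u p) d
    rw [zero_add] at this
    rw [← this]
    refine integral_mono_ioc hε.le monoSq.intervalIntegrable
      (monoSp.comp (monotone_id.add_const d)).intervalIntegrable ?_
    intro t ht
    refine csSup_le_csSup (bddA hM p (t + d)) (insert_nonempty _ _) ?_
    rintro w (rfl | ⟨z, hz, rfl⟩)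
    · exact Or.inr ⟨q, by simp only [mem_ball, hqp]; linarith [ht.1], rfl⟩
    · refine Or.inr ⟨z, ?_, rfl⟩
      have : dist z p ≤ dist z q + d := by rw [← hqp]; exact dist_triangle z q p
      simp only [mem_ball] at hz ⊢; linarith
  -- step 2 : splitting ∫ Iq
  have h2 : (∫ t in (0:ℝ)..d, infb u q t) + (∫ t in d..ε, infb u q t)
      = ∫ t in (0:ℝ)..ε, infb u q t :=
    intervalIntegral.integral_add_adjacent_intervals antIq.intervalIntegrable
      antIq.intervalIntegrable
  -- step 3 : ∫_0^d Iq ≤ d * u q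
  have h3 : (∫ t in (0:ℝ)..d, infb u q t) ≤ d * u q := by
    have : (∫ t in (0:ℝ)..d, infb u q t) ≤ ∫ _t in (0:ℝ)..d, u q :=
      integral_mono_ioc hd0 antIq.intervalIntegrable intervalIntegrable_const
        (fun t _ => csInf_le (bddB hM q t) (mem_insert _ _))
    simpa using this
  -- step 4 : ∫_d^ε Iq ≤ ∫_0^{ε-d} Ip
  have h4 : (∫ t in d..ε, infb u q t) ≤ ∫ t in (0:ℝ)..(ε - d), infb u p t := by
    have := intervalIntegral.integral_comp_sub_right (a := d) (b := ε) (infb u p) d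
    rw [sub_self] at this
    rw [← this]
    refine integral_mono_ioc hd antIq.intervalIntegrable
      (antIp.comp_monotone (fun a b h => sub_le_sub_right h d)).intervalIntegrable ?_
    intro t ht
    refine csInf_le_csInf (bddB hM q t) (insert_nonempty _ _) ?_
    rintro w (rfl | ⟨z, hz, rfl⟩)
    · exact Or.inr ⟨p, by simp only [mem_ball]; rw [← hd_def]; exact ht.1, rfl⟩
    · refine Or.inr ⟨z, ?_, rfl⟩
      have : dist z q ≤ dist z p + d := by
        simpa [hd_def, dist_comm p q] using dist_triangle z p q
      simp only [mem_ball] at hz ⊢; linarith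
  -- step 5, 6, 7 : splittings of ∫ Sp and ∫ Ip
  have h5 : (∫ t in (0:ℝ)..d, supb u p t) + (∫ t in d..ε, supb u p t)
      = ∫ t in (0:ℝ)..ε, supb u p t :=
    intervalIntegral.integral_add_adjacent_intervals monoSp.intervalIntegrable
      monoSp.intervalIntegrable
  have h6 : (∫ t in d..ε, supb u p t) + (∫ t in ε..(ε + d), supb u p t)
      = ∫ t in d..(ε + d), supb u p t :=
    intervalIntegral.integral_add_adjacent_intervals monoSp.intervalIntegrable
      monoSp.intervalIntegrable
  have h7 : (∫ t in (0:ℝ)..(ε - d), infb u p t) + (∫ t in (ε - d)..ε, infb u p t)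
      = ∫ t in (0:ℝ)..ε, infb u p t :=
    intervalIntegral.integral_add_adjacent_intervals antIp.intervalIntegrable
      antIp.intervalIntegrable
  -- step 8 : ∫_ε^{ε+d} Sp ≤ d * (u p + L*(2ε+d))
  have h8 : (∫ t in ε..(ε + d), supb u p t) ≤ d * u p + d * (L * (2 * ε + d)) := by
    have hle : (∫ t in ε..(ε + d), supb u p t)
        ≤ ∫ _t in ε..(ε + d), (u p + L * (2 * ε + d)) := by
      refine integral_mono_ioc (by linarith) monoSp.intervalIntegrable
        intervalIntegrable_const ?_
      intro t ht
      refine csSup_le (insert_nonempty _ _) ?_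
      rintro w (rfl | ⟨z, hz, rfl⟩)
      · nlinarith
      · simp only [mem_ball] at hz
        have hz1 : dist z p < ε + d := lt_of_lt_of_le hz (by linarith [ht.2])
        have hb := H z p hz1 (by simpa using by linarith : dist p p < ε + d)
        have hb1 : u z - u p ≤ L * (dist z p + ε) := (abs_sub_le_iff.mp hb).1
        have : L * (dist z p + ε) ≤ L * (2 * ε + d) := by
          apply mul_le_mul_of_nonneg_left _ hL
          linarith [ht.2]
        linarith
    have : (∫ _t in ε..(ε + d), (u p + L * (2 * ε + d)))
        = d * u p + d * (L * (2 * ε + d)) := by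
      rw [intervalIntegral.integral_const, smul_eq_mul]; ring
    linarith
  -- step 9 : d * u p ≤ ∫_0^d Sp
  have h9 : d * u p ≤ ∫ t in (0:ℝ)..d, supb u p t := by
    have : (∫ _t in (0:ℝ)..d, u p) ≤ ∫ t in (0:ℝ)..d, supb u p t :=
      integral_mono_ioc hd0 intervalIntegrable_const monoSp.intervalIntegrable
        (fun t _ => le_csSup (bddA hM p t) (mem_insert _ _))
    simpa using this
  -- step 10 : d * (u q - L*(d+2ε)) ≤ ∫_{ε-d}^ε Ip
  have h10 : d * u q - d * (L * (d + 2 * ε)) ≤ ∫ t in (ε - d)..ε, infb u p t := by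
    have hge : (∫ _t in (ε - d)..ε, (u q - L * (d + 2 * ε)))
        ≤ ∫ t in (ε - d)..ε, infb u p t := by
      refine integral_mono_ioc (by linarith) intervalIntegrable_const
        antIp.intervalIntegrable ?_
      intro t ht
      refine le_csInf (insert_nonempty _ _) ?_
      rintro w (rfl | ⟨z, hz, rfl⟩)
      · have hb := H q p (by rw [hqp]; linarith : dist q p < ε + d)
          (by simpa using by linarith : dist p p < ε + d)
        have hb1 : u q - u p ≤ L * (dist q p + ε) := (abs_sub_le_iff.mp hb).1
        rw [hqp] at hb1
        have : L * (d + ε) ≤ L * (d + 2 * ε) := by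
          apply mul_le_mul_of_nonneg_left _ hL; linarith
        linarith
      · simp only [mem_ball] at hz
        have hz1 : dist z p < ε + d := by linarith [ht.2]
        have hb := H q z (by rw [hqp]; linarith : dist q p < ε + d) hz1
        have hb1 : u q - u z ≤ L * (dist q z + ε) := (abs_sub_le_iff.mp hb).1
        have hdzq : dist q z ≤ d + dist z p := by
          have := dist_triangle q p z
          rw [hqp] at this
          simpa [dist_comm z p] using this
        have : L * (dist q z + ε) ≤ L * (d + 2 * ε) := by
          apply mul_le_mul_of_nonneg_left _ hL
          have := ht.2
          linarith
        linarith
    have : (∫ _t in (ε - d)..ε, (u q - L * (d + 2 * ε)))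
        = d * u q - d * (L * (d + 2 * ε)) := by
      rw [intervalIntegral.integral_const, smul_eq_mul]; ring
    linarith
  calc ((∫ t in (0:ℝ)..ε, supb u q t) + (∫ t in (0:ℝ)..ε, infb u q t)) -
      ((∫ t in (0:ℝ)..ε, supb u p t) + (∫ t in (0:ℝ)..ε, infb u p t))
      ≤ d * (L * (2 * ε + d)) + d * (L * (d + 2 * ε)) := by linarith
    _ = 2 * L * d * (2 * ε + d) := by ring

/-- **Cancellation estimate for the tug-of-war part.** Let `n ≥ 1`, `ε > 0`, `L ≥ 0`,
`|x − y| ≤ ε`, and let `u` be bounded with `|u(z) − u(z')| ≤ L(|z − z'| + ε)` for all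
`z, z' ∈ B_{3ε}(x)`. Then
`|(1/(2ε)) ∫₀^ε (sup_{B_t(x)} u + inf_{B_t(x)} u) dt −
  (1/(2ε)) ∫₀^ε (sup_{B_t(y)} u + inf_{B_t(y)} u) dt| ≤ 3 L |x − y|`. -/
theorem tug_of_war_cancellation (n : ℕ) (hn : 1 ≤ n) (ε L : ℝ) (hε : 0 < ε) (hL : 0 ≤ L)
    (x y : EuclideanSpace ℝ (Fin n)) (hxy : dist x y ≤ ε)
    (u : EuclideanSpace ℝ (Fin n) → ℝ)
    (hubdd : ∃ M, ∀ z, |u z| ≤ M)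
    (hulip : ∀ z ∈ Metric.ball x (3 * ε), ∀ z' ∈ Metric.ball x (3 * ε),
      |u z - u z'| ≤ L * (dist z z' + ε)) :
    |(1 / (2 * ε)) *
        (∫ t in (0 : ℝ)..ε, (sSup (u '' Metric.ball x t) + sInf (u '' Metric.ball x t)))
      - (1 / (2 * ε)) *
        (∫ t in (0 : ℝ)..ε, (sSup (u '' Metric.ball y t) + sInf (u '' Metric.ball y t)))| ≤
      3 * L * dist x y := by
  obtain ⟨M, hM⟩ := hubdd
  set d := dist x y with hd_def
  have hd0 : 0 ≤ d := dist_nonneg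
  -- rewrite the two integrals using supb/infb
  have hrw : ∀ r : EuclideanSpace ℝ (Fin n),
      (∫ t in (0 : ℝ)..ε, (sSup (u '' Metric.ball r t) + sInf (u '' Metric.ball r t)))
      = (∫ t in (0:ℝ)..ε, supb u r t) + (∫ t in (0:ℝ)..ε, infb u r t) := by
    intro r
    rw [← intervalIntegral.integral_add (supb_mono hM r (M := M)).intervalIntegrable
      (infb_anti hM r (M := M)).intervalIntegrable]
    refine integral_congr_ioc hε.le ?_
    intro t ht
    have habs : insert (u r) (u '' Metric.ball r t) = u '' Metric.ball r t :=
      insert_eq_self.mpr ⟨r, mem_ball_self ht.1, rfl⟩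
    simp only [supb, infb, habs]
  -- the two half-estimates
  have Hx : ∀ z z', dist z x < ε + dist x y → dist z' x < ε + dist x y →
      |u z - u z'| ≤ L * (dist z z' + ε) := by
    intro z z' h1 h2
    exact hulip z (by simp only [mem_ball]; linarith) z' (by simp only [mem_ball]; linarith)
  have Hy : ∀ z z', dist z y < ε + dist y x → dist z' y < ε + dist y x →
      |u z - u z'| ≤ L * (dist z z' + ε) := by
    intro z z' h1 h2
    rw [dist_comm y x, ← hd_def] at h1 h2
    have t1 : dist z x < 3 * ε := by
      have := dist_triangle z y x
      rw [dist_comm y x, ← hd_def] at this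
      linarith
    have t2 : dist z' x < 3 * ε := by
      have := dist_triangle z' y x
      rw [dist_comm y x, ← hd_def] at this
      linarith
    exact hulip z (by simpa [mem_ball] using t1) z' (by simpa [mem_ball] using t2)
  have half1 := tow_half ε L hε hL x y hxy u M hM Hx
  have half2 := tow_half ε L hε hL y x (by rw [dist_comm]; exact hxy) u M hM Hy
  rw [dist_comm y x, ← hd_def] at half2
  rw [← hd_def] at half1
  rw [hrw x, hrw y]
  set A := (∫ t in (0:ℝ)..ε, supb u x t) + (∫ t in (0:ℝ)..ε, infb u x t) with hA
  set B := (∫ t in (0:ℝ)..ε, supb u y t) + (∫ t in (0:ℝ)..ε, infb u y t) with hB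
  have habs : |A - B| ≤ 2 * L * d * (2 * ε + d) := abs_sub_le_iff.mpr ⟨half2, half1⟩
  have h2ε : (0:ℝ) < 2 * ε := by linarith
  calc |1 / (2 * ε) * A - 1 / (2 * ε) * B| = 1 / (2 * ε) * |A - B| := by
        rw [← mul_sub, abs_mul, abs_of_pos (by positivity)]
    _ ≤ 1 / (2 * ε) * (2 * L * d * (2 * ε + d)) := by
        exact mul_le_mul_of_nonneg_left habs (by positivity)
    _ ≤ 3 * L * d := by
        rw [div_mul_eq_mul_div, one_mul, div_le_iff₀ h2ε]
        nlinarith [mul_nonneg (mul_nonneg hL hd0) (sub_nonneg.mpr hxy)]
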